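/- Let a_n(i,j) be the number of permutations of [n] avoiding {1243, 1324} with first letter i and second letter j. Then for 1 ≤ i ≤ n-3 and i+2 ≤ j ≤ n-1, a_n(i,j) = a_{n-1}(i,j) + Σ_{ℓ=1}^{i-1} a_{n-1}(ℓ, j-1). -/

import Mathlib

/-- `π` contains the pattern `p` (given as the sequence of its values). -/
def ContainsPat {n k : ℕ} (π : Equiv.Perm (Fin n)) (p : Fin k → ℕ) : Prop :=
  ∃ f : Fin k → Fin n, StrictMono f ∧ ∀ a b : Fin k, p a < p b ↔ π (f a) < π (f b)

/-- The first letter of `π` (one-line notation, values in `[n]`) is `i`. -/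
def FirstIs {n : ℕ} (π : Equiv.Perm (Fin n)) (i : ℕ) : Prop :=
  ∀ j : Fin n, (j : ℕ) = 0 → (π j : ℕ) + 1 = i

/-- The second letter of `π` (one-line notation, values in `[n]`) is `i`. -/
def SecondIs {n : ℕ} (π : Equiv.Perm (Fin n)) (i : ℕ) : Prop :=
  ∀ j : Fin n, (j : ℕ) = 1 → (π j : ℕ) + 1 = i

/-- The number of permutations of `[n]` avoiding both patterns with first letter `i`
and second letter `j`. -/
noncomputable def a (n i j : ℕ) : ℕ :=
  Nat.card {π : Equiv.Perm (Fin n) //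
    ¬ ContainsPat π ![1, 2, 4, 3] ∧ ¬ ContainsPat π ![1, 3, 2, 4] ∧ FirstIs π i ∧ SecondIs π j}

set_option linter.unusedSectionVars false




namespace Aux
open Equiv

lemma vec4_eval {α : Type*} (x0 x1 x2 x3 : α) (t : Fin 4) :
    ![x0,x1,x2,x3] t = if (t:ℕ) = 0 then x0 else if (t:ℕ) = 1 then x1
      else if (t:ℕ) = 2 then x2 else x3 := by
  rcases t with ⟨t, ht⟩
  interval_cases t <;> rfl

lemma contains1243_iff {n : ℕ} (π : Equiv.Perm (Fin n)) :
    ContainsPat π ![1, 2, 4, 3] ↔ ∃ p1 p2 p3 p4 : Fin n,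
      (p1 : ℕ) < p2 ∧ (p2 : ℕ) < p3 ∧ (p3 : ℕ) < p4 ∧
      (π p1 : ℕ) < π p2 ∧ (π p2 : ℕ) < π p4 ∧ (π p4 : ℕ) < π p3 := by
  constructor
  · rintro ⟨f, hf, hiff⟩
    refine ⟨f 0, f 1, f 2, f 3, hf (by decide), hf (by decide), hf (by decide), ?_, ?_, ?_⟩
    · exact (hiff 0 1).1 (by norm_num)
    · exact (hiff 1 3).1 (by decide)
    · exact (hiff 3 2).1 (by decide)
  · rintro ⟨p1, p2, p3, p4, h12, h23, h34, v1, v2, v3⟩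
    refine ⟨fun t => if (t:ℕ) = 0 then p1 else if (t:ℕ) = 1 then p2
      else if (t:ℕ) = 2 then p3 else p4, ?_, ?_⟩
    · intro a b hab
      have ha := a.isLt; have hb := b.isLt
      rw [Fin.lt_def] at hab
      simp only [Fin.lt_def]
      split_ifs <;> omega
    · intro a b
      have ha := a.isLt; have hb := b.isLt
      rw [vec4_eval, vec4_eval]
      simp only [Fin.lt_def]
      split_ifs <;> omega

lemma contains1324_iff {n : ℕ} (π : Equiv.Perm (Fin n)) :
    ContainsPat π ![1, 3, 2, 4] ↔ ∃ p1 p2 p3 p4 : Fin n,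
      (p1 : ℕ) < p2 ∧ (p2 : ℕ) < p3 ∧ (p3 : ℕ) < p4 ∧
      (π p1 : ℕ) < π p3 ∧ (π p3 : ℕ) < π p2 ∧ (π p2 : ℕ) < π p4 := by
  constructor
  · rintro ⟨f, hf, hiff⟩
    refine ⟨f 0, f 1, f 2, f 3, hf (by decide), hf (by decide), hf (by decide), ?_, ?_, ?_⟩
    · exact (hiff 0 2).1 (by decide)
    · exact (hiff 2 1).1 (by decide)
    · exact (hiff 1 3).1 (by decide)
  · rintro ⟨p1, p2, p3, p4, h12, h23, h34, v1, v2, v3⟩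
    refine ⟨fun t => if (t:ℕ) = 0 then p1 else if (t:ℕ) = 1 then p2
      else if (t:ℕ) = 2 then p3 else p4, ?_, ?_⟩
    · intro a b hab
      have ha := a.isLt; have hb := b.isLt
      rw [Fin.lt_def] at hab
      simp only [Fin.lt_def]
      split_ifs <;> omega
    · intro a b
      have ha := a.isLt; have hb := b.isLt
      rw [vec4_eval, vec4_eval]
      simp only [Fin.lt_def]
      split_ifs <;> omega

variable {m : ℕ}


/-- insert: `insP σ p0 v0` has value `v0` at position `p0`. -/
def insP (σ : Equiv.Perm (Fin m)) (p0 v0 : Fin (m+1)) : Equiv.Perm (Fin (m+1)) :=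
  ((finSuccEquiv' p0).trans (Equiv.optionCongr σ)).trans (finSuccEquiv' v0).symm

lemma insP_self (σ : Equiv.Perm (Fin m)) (p0 v0 : Fin (m+1)) : insP σ p0 v0 p0 = v0 := by
  simp [insP, finSuccEquiv'_at, finSuccEquiv'_symm_none]

lemma insP_succAbove (σ : Equiv.Perm (Fin m)) (p0 v0 : Fin (m+1)) (q : Fin m) :
    insP σ p0 v0 (p0.succAbove q) = v0.succAbove (σ q) := by
  simp [insP, finSuccEquiv'_succAbove, finSuccEquiv'_symm_some]

/-- delete position `p0` (and its value). -/
def delP (π : Equiv.Perm (Fin (m+1))) (p0 : Fin (m+1)) : Equiv.Perm (Fin m) :=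
  Equiv.removeNone (((finSuccEquiv' p0).symm.trans π).trans (finSuccEquiv' (π p0)))

lemma delP_succAbove (π : Equiv.Perm (Fin (m+1))) (p0 : Fin (m+1)) (q : Fin m) :
    (π p0).succAbove (delP π p0 q) = π (p0.succAbove q) := by
  have hne : π (p0.succAbove q) ≠ π p0 := by
    intro h
    exact Fin.succAbove_ne p0 q (π.injective h)
  obtain ⟨r, hr⟩ := Fin.exists_succAbove_eq hne
  have h1 : (((finSuccEquiv' p0).symm.trans π).trans (finSuccEquiv' (π p0))) (some q)
      = some r := by
    simp [Equiv.trans_apply, finSuccEquiv'_symm_some, ← hr, finSuccEquiv'_succAbove]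
  have h2 := Equiv.removeNone_some _ ⟨r, h1⟩
  rw [h1] at h2
  have : delP π p0 q = r := by
    apply Option.some_injective
    exact h2
  rw [this, hr]

lemma insP_delP (π : Equiv.Perm (Fin (m+1))) (p0 : Fin (m+1)) :
    insP (delP π p0) p0 (π p0) = π := by
  apply Equiv.ext
  intro x
  by_cases hx : x = p0
  · rw [hx, insP_self]
  · obtain ⟨q, hq⟩ := Fin.exists_succAbove_eq hx
    rw [← hq, insP_succAbove, delP_succAbove]

lemma delP_insP (σ : Equiv.Perm (Fin m)) (p0 v0 : Fin (m+1)) :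
    delP (insP σ p0 v0) p0 = σ := by
  apply Equiv.ext
  intro q
  have h0 : insP σ p0 v0 p0 = v0 := insP_self σ p0 v0
  have h := delP_succAbove (insP σ p0 v0) p0 q
  rw [insP_succAbove, h0] at h
  exact Fin.succAbove_right_injective h

lemma val_succAbove (p : Fin (m+1)) (q : Fin m) :
    ((p.succAbove q : Fin (m+1)) : ℕ) = if (q:ℕ) < p then (q:ℕ) else (q:ℕ)+1 := by
  rw [Fin.succAbove]
  split_ifs with h1 h2 h2
  · rfl
  · exfalso; rw [Fin.lt_def] at h1; exact h2 h1
  · exfalso; rw [Fin.lt_def] at h1; exact h1 h2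
  · rfl

lemma val_ne_of_ne {k : ℕ} (π : Perm (Fin k)) {x y : Fin k} (h : (x:ℕ) ≠ (y:ℕ)) :
    (π x : ℕ) ≠ (π y : ℕ) := by
  intro hv
  exact h (congrArg Fin.val (π.injective (Fin.ext hv)))

section Case1

variable {i j : ℕ} (hm : 3 ≤ m) (hi1 : 1 ≤ i) (hij : i + 2 ≤ j) (hjm : j ≤ m)
  (π : Perm (Fin (m+1))) (σ : Perm (Fin m))
  (P0 P1 P2 vJ : Fin (m+1))
  (hP0 : (P0:ℕ) = 0) (hP1 : (P1:ℕ) = 1) (hP2 : (P2:ℕ) = 2) (hvJ : (vJ:ℕ) = j)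
  (hrel : ∀ q : Fin m, π (P2.succAbove q) = vJ.succAbove (σ q))
  (hπ0 : (π P0 : ℕ) = i - 1)
  (hπ1 : (π P1 : ℕ) = j - 1)
  (hπ2 : (π P2 : ℕ) = j)

include hP2 hvJ hrel in
lemma case1_pull : ∀ x : Fin (m+1), (x:ℕ) ≠ 2 → ∃ q : Fin m,
    ((x:ℕ) < 2 ∧ ((q:ℕ) = x) ∨ 2 < (x:ℕ) ∧ (q:ℕ)+1 = (x:ℕ)) ∧
    ((π x:ℕ) < j ∧ (σ q:ℕ) = (π x:ℕ) ∨ j < (π x:ℕ) ∧ (σ q:ℕ)+1 = (π x:ℕ)) := by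
  intro x hx
  have hx' : x ≠ P2 := by
    intro h; apply hx; rw [h, hP2]
  obtain ⟨q, hq⟩ := Fin.exists_succAbove_eq hx'
  refine ⟨q, ?_, ?_⟩
  · have h1 := val_succAbove P2 q
    rw [hq, hP2] at h1
    split_ifs at h1 <;> omega
  · have h2 := hrel q
    rw [hq] at h2
    have h3 := val_succAbove vJ (σ q)
    rw [← h2, hvJ] at h3
    split_ifs at h3 <;> omega

include hm hi1 hij hjm hP0 hP1 hP2 hvJ hrel hπ0 hπ1 hπ2 in
lemma case1_hard_1243 :
    ContainsPat π ![1,2,4,3] → ContainsPat σ ![1,2,4,3] := by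
  intro hc
  rw [contains1243_iff] at hc
  rw [contains1243_iff]
  obtain ⟨x1, x2, x3, x4, h12, h23, h34, v12, v24, v43⟩ := hc
  have pull := case1_pull π σ P2 vJ hP2 hvJ hrel
  have hb1 := x1.isLt; have hb2 := x2.isLt; have hb3 := x3.isLt; have hb4 := x4.isLt
  by_cases e1 : (x1:ℕ) = 2
  · -- slot 1 is position 2 (value j); replace it by position 1 (value j-1)
    have hval1 : (π x1 : ℕ) = j := by
      have hx : x1 = P2 := Fin.ext (by omega)
      rw [hx]; exact hπ2
    obtain ⟨q0, hq0p, hq0v⟩ := pull P1 (by omega)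
    obtain ⟨q2, hq2p, hq2v⟩ := pull x2 (by omega)
    obtain ⟨q3, hq3p, hq3v⟩ := pull x3 (by omega)
    obtain ⟨q4, hq4p, hq4v⟩ := pull x4 (by omega)
    rw [hπ1] at hq0v
    rw [hP1] at hq0p
    refine ⟨q0, q2, q3, q4, ?_, ?_, ?_, ?_, ?_, ?_⟩
    · rcases hq0p with ⟨h,h'⟩|⟨h,h'⟩ <;> rcases hq2p with ⟨g,g'⟩|⟨g,g'⟩ <;> omega
    · rcases hq2p with ⟨h,h'⟩|⟨h,h'⟩ <;> rcases hq3p with ⟨g,g'⟩|⟨g,g'⟩ <;> omega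
    · rcases hq3p with ⟨h,h'⟩|⟨h,h'⟩ <;> rcases hq4p with ⟨g,g'⟩|⟨g,g'⟩ <;> omega
    · rcases hq0v with ⟨h,h'⟩|⟨h,h'⟩ <;> rcases hq2v with ⟨g,g'⟩|⟨g,g'⟩ <;> omega
    · rcases hq2v with ⟨h,h'⟩|⟨h,h'⟩ <;> rcases hq4v with ⟨g,g'⟩|⟨g,g'⟩ <;> omega
    · rcases hq4v with ⟨h,h'⟩|⟨h,h'⟩ <;> rcases hq3v with ⟨g,g'⟩|⟨g,g'⟩ <;> omega
  by_cases e2 : (x2:ℕ) = 2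
  · -- slot 2 is position 2 (value j); use positions 0 and 1 as new slots 1,2
    have hval2 : (π x2 : ℕ) = j := by
      have hx : x2 = P2 := Fin.ext (by omega)
      rw [hx]; exact hπ2
    obtain ⟨qa, hqap, hqav⟩ := pull P0 (by omega)
    obtain ⟨qb, hqbp, hqbv⟩ := pull P1 (by omega)
    obtain ⟨q3, hq3p, hq3v⟩ := pull x3 (by omega)
    obtain ⟨q4, hq4p, hq4v⟩ := pull x4 (by omega)
    rw [hπ0] at hqav; rw [hπ1] at hqbv
    rw [hP0] at hqap; rw [hP1] at hqbp
    refine ⟨qa, qb, q3, q4, ?_, ?_, ?_, ?_, ?_, ?_⟩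
    · rcases hqap with ⟨h,h'⟩|⟨h,h'⟩ <;> rcases hqbp with ⟨g,g'⟩|⟨g,g'⟩ <;> omega
    · rcases hqbp with ⟨h,h'⟩|⟨h,h'⟩ <;> rcases hq3p with ⟨g,g'⟩|⟨g,g'⟩ <;> omega
    · rcases hq3p with ⟨h,h'⟩|⟨h,h'⟩ <;> rcases hq4p with ⟨g,g'⟩|⟨g,g'⟩ <;> omega
    · rcases hqav with ⟨h,h'⟩|⟨h,h'⟩ <;> rcases hqbv with ⟨g,g'⟩|⟨g,g'⟩ <;> omega
    · rcases hqbv with ⟨h,h'⟩|⟨h,h'⟩ <;> rcases hq4v with ⟨g,g'⟩|⟨g,g'⟩ <;> omega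
    · rcases hq4v with ⟨h,h'⟩|⟨h,h'⟩ <;> rcases hq3v with ⟨g,g'⟩|⟨g,g'⟩ <;> omega
  by_cases e3 : (x3:ℕ) = 2
  · -- then x1,x2 are positions 0,1 and slot 4 value is strictly between j-1 and j: impossible
    exfalso
    have hval3 : (π x3 : ℕ) = j := by
      have hx : x3 = P2 := Fin.ext (by omega)
      rw [hx]; exact hπ2
    have hx2 : x2 = P1 := Fin.ext (by omega)
    have hval2 : (π x2 : ℕ) = j - 1 := by rw [hx2]; exact hπ1
    have hne : (π x4 : ℕ) ≠ j - 1 := by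
      have : (x4:ℕ) ≠ (P1:ℕ) := by omega
      have h := val_ne_of_ne π this
      omega
    omega
  by_cases e4 : (x4:ℕ) = 2
  · omega
  · -- no special position involved
    obtain ⟨q1, hq1p, hq1v⟩ := pull x1 (by omega)
    obtain ⟨q2, hq2p, hq2v⟩ := pull x2 (by omega)
    obtain ⟨q3, hq3p, hq3v⟩ := pull x3 (by omega)
    obtain ⟨q4, hq4p, hq4v⟩ := pull x4 (by omega)
    refine ⟨q1, q2, q3, q4, ?_, ?_, ?_, ?_, ?_, ?_⟩
    · rcases hq1p with ⟨h,h'⟩|⟨h,h'⟩ <;> rcases hq2p with ⟨g,g'⟩|⟨g,g'⟩ <;> omega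
    · rcases hq2p with ⟨h,h'⟩|⟨h,h'⟩ <;> rcases hq3p with ⟨g,g'⟩|⟨g,g'⟩ <;> omega
    · rcases hq3p with ⟨h,h'⟩|⟨h,h'⟩ <;> rcases hq4p with ⟨g,g'⟩|⟨g,g'⟩ <;> omega
    · rcases hq1v with ⟨h,h'⟩|⟨h,h'⟩ <;> rcases hq2v with ⟨g,g'⟩|⟨g,g'⟩ <;> omega
    · rcases hq2v with ⟨h,h'⟩|⟨h,h'⟩ <;> rcases hq4v with ⟨g,g'⟩|⟨g,g'⟩ <;> omega
    · rcases hq4v with ⟨h,h'⟩|⟨h,h'⟩ <;> rcases hq3v with ⟨g,g'⟩|⟨g,g'⟩ <;> omega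


include hP2 hvJ hrel in
lemma case1_easy {k : ℕ} (pat : Fin k → ℕ) :
    ContainsPat σ pat → ContainsPat π pat := by
  rintro ⟨f, hf, hiff⟩
  refine ⟨fun t => P2.succAbove (f t), (Fin.strictMono_succAbove P2).comp hf, fun a b => ?_⟩
  rw [hrel (f a), hrel (f b), Fin.succAbove_lt_succAbove_iff]
  exact hiff a b

include hm hi1 hij hjm hP0 hP1 hP2 hvJ hrel hπ0 hπ1 hπ2 in
lemma case1_hard_1324 :
    ContainsPat π ![1,3,2,4] → ContainsPat σ ![1,3,2,4] := by
  intro hc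
  rw [contains1324_iff] at hc
  rw [contains1324_iff]
  obtain ⟨x1, x2, x3, x4, h12, h23, h34, v13, v32, v24⟩ := hc
  have pull := case1_pull π σ P2 vJ hP2 hvJ hrel
  have hb1 := x1.isLt; have hb2 := x2.isLt; have hb3 := x3.isLt; have hb4 := x4.isLt
  by_cases e1 : (x1:ℕ) = 2
  · -- slot 1 is position 2 (value j); replace it by position 1 (value j-1)
    have hval1 : (π x1 : ℕ) = j := by
      have hx : x1 = P2 := Fin.ext (by omega)
      rw [hx]; exact hπ2
    obtain ⟨q0, hq0p, hq0v⟩ := pull P1 (by omega)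
    obtain ⟨q2, hq2p, hq2v⟩ := pull x2 (by omega)
    obtain ⟨q3, hq3p, hq3v⟩ := pull x3 (by omega)
    obtain ⟨q4, hq4p, hq4v⟩ := pull x4 (by omega)
    rw [hπ1] at hq0v
    rw [hP1] at hq0p
    refine ⟨q0, q2, q3, q4, ?_, ?_, ?_, ?_, ?_, ?_⟩
    · rcases hq0p with ⟨h,h'⟩|⟨h,h'⟩ <;> rcases hq2p with ⟨g,g'⟩|⟨g,g'⟩ <;> omega
    · rcases hq2p with ⟨h,h'⟩|⟨h,h'⟩ <;> rcases hq3p with ⟨g,g'⟩|⟨g,g'⟩ <;> omega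
    · rcases hq3p with ⟨h,h'⟩|⟨h,h'⟩ <;> rcases hq4p with ⟨g,g'⟩|⟨g,g'⟩ <;> omega
    · rcases hq0v with ⟨h,h'⟩|⟨h,h'⟩ <;> rcases hq3v with ⟨g,g'⟩|⟨g,g'⟩ <;> omega
    · rcases hq3v with ⟨h,h'⟩|⟨h,h'⟩ <;> rcases hq2v with ⟨g,g'⟩|⟨g,g'⟩ <;> omega
    · rcases hq2v with ⟨h,h'⟩|⟨h,h'⟩ <;> rcases hq4v with ⟨g,g'⟩|⟨g,g'⟩ <;> omega
  by_cases e2 : (x2:ℕ) = 2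
  · -- slot 2 is position 2 (value j)
    have hval2 : (π x2 : ℕ) = j := by
      have hx : x2 = P2 := Fin.ext (by omega)
      rw [hx]; exact hπ2
    -- x1 is position 0 or 1
    by_cases e1' : (x1:ℕ) = 1
    · -- value j-1; then slot 3 value is in (j-1,j): impossible
      exfalso
      have hval1 : (π x1 : ℕ) = j - 1 := by
        have hx : x1 = P1 := Fin.ext (by omega)
        rw [hx]; exact hπ1
      have hne : (π x3 : ℕ) ≠ j - 1 := by
        have : (x3:ℕ) ≠ (P1:ℕ) := by omega
        have h := val_ne_of_ne π this
        omega
      omega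
    · -- x1 is position 0, value i-1
      have hval1 : (π x1 : ℕ) = i - 1 := by
        have hx : x1 = P0 := Fin.ext (by omega)
        rw [hx]; exact hπ0
      obtain ⟨qa, hqap, hqav⟩ := pull P0 (by omega)
      obtain ⟨qb, hqbp, hqbv⟩ := pull P1 (by omega)
      obtain ⟨q3, hq3p, hq3v⟩ := pull x3 (by omega)
      obtain ⟨q4, hq4p, hq4v⟩ := pull x4 (by omega)
      rw [hπ0] at hqav; rw [hπ1] at hqbv
      rw [hP0] at hqap; rw [hP1] at hqbp
      have hne3 : (π x3 : ℕ) ≠ j - 1 := by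
        have : (x3:ℕ) ≠ (P1:ℕ) := by omega
        have h := val_ne_of_ne π this
        omega
      refine ⟨qa, qb, q3, q4, ?_, ?_, ?_, ?_, ?_, ?_⟩
      · rcases hqap with ⟨h,h'⟩|⟨h,h'⟩ <;> rcases hqbp with ⟨g,g'⟩|⟨g,g'⟩ <;> omega
      · rcases hqbp with ⟨h,h'⟩|⟨h,h'⟩ <;> rcases hq3p with ⟨g,g'⟩|⟨g,g'⟩ <;> omega
      · rcases hq3p with ⟨h,h'⟩|⟨h,h'⟩ <;> rcases hq4p with ⟨g,g'⟩|⟨g,g'⟩ <;> omega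
      · rcases hqav with ⟨h,h'⟩|⟨h,h'⟩ <;> rcases hq3v with ⟨g,g'⟩|⟨g,g'⟩ <;> omega
      · rcases hq3v with ⟨h,h'⟩|⟨h,h'⟩ <;> rcases hqbv with ⟨g,g'⟩|⟨g,g'⟩ <;> omega
      · rcases hqbv with ⟨h,h'⟩|⟨h,h'⟩ <;> rcases hq4v with ⟨g,g'⟩|⟨g,g'⟩ <;> omega
  by_cases e3 : (x3:ℕ) = 2
  · -- slot 3 is position 2 (value j), x2 is position 1 (value j-1): need j < j-1
    exfalso
    have hval3 : (π x3 : ℕ) = j := by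
      have hx : x3 = P2 := Fin.ext (by omega)
      rw [hx]; exact hπ2
    have hval2 : (π x2 : ℕ) = j - 1 := by
      have hx : x2 = P1 := Fin.ext (by omega)
      rw [hx]; exact hπ1
    omega
  by_cases e4 : (x4:ℕ) = 2
  · omega
  · obtain ⟨q1, hq1p, hq1v⟩ := pull x1 (by omega)
    obtain ⟨q2, hq2p, hq2v⟩ := pull x2 (by omega)
    obtain ⟨q3, hq3p, hq3v⟩ := pull x3 (by omega)
    obtain ⟨q4, hq4p, hq4v⟩ := pull x4 (by omega)
    refine ⟨q1, q2, q3, q4, ?_, ?_, ?_, ?_, ?_, ?_⟩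
    · rcases hq1p with ⟨h,h'⟩|⟨h,h'⟩ <;> rcases hq2p with ⟨g,g'⟩|⟨g,g'⟩ <;> omega
    · rcases hq2p with ⟨h,h'⟩|⟨h,h'⟩ <;> rcases hq3p with ⟨g,g'⟩|⟨g,g'⟩ <;> omega
    · rcases hq3p with ⟨h,h'⟩|⟨h,h'⟩ <;> rcases hq4p with ⟨g,g'⟩|⟨g,g'⟩ <;> omega
    · rcases hq1v with ⟨h,h'⟩|⟨h,h'⟩ <;> rcases hq3v with ⟨g,g'⟩|⟨g,g'⟩ <;> omega
    · rcases hq3v with ⟨h,h'⟩|⟨h,h'⟩ <;> rcases hq2v with ⟨g,g'⟩|⟨g,g'⟩ <;> omega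
    · rcases hq2v with ⟨h,h'⟩|⟨h,h'⟩ <;> rcases hq4v with ⟨g,g'⟩|⟨g,g'⟩ <;> omega

end Case1
section Case2

variable {i j l : ℕ} (hm : 3 ≤ m) (hl1 : 1 ≤ l) (hli : l < i) (hij : i + 2 ≤ j) (hjm : j ≤ m)
  (him : i + 2 ≤ m)
  (π : Perm (Fin (m+1))) (σ : Perm (Fin m))
  (P0 P1 P2 vI : Fin (m+1)) (Q0 Q1 : Fin m)
  (hP0 : (P0:ℕ) = 0) (hP1 : (P1:ℕ) = 1) (hP2 : (P2:ℕ) = 2) (hvI : (vI:ℕ) = i - 1)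
  (hQ0 : (Q0:ℕ) = 0) (hQ1 : (Q1:ℕ) = 1)
  (hrel : ∀ q : Fin m, π (P0.succAbove q) = vI.succAbove (σ (Equiv.swap Q0 Q1 q)))
  (hπ0 : (π P0:ℕ) = i - 1) (hπ1 : (π P1:ℕ) = j - 1) (hπ2 : (π P2:ℕ) = l - 1)
  (hσ0 : (σ Q0:ℕ) = l - 1) (hσ1 : (σ Q1:ℕ) = j - 2)

include hm hP0 hQ0 hQ1 in
lemma case2_pos (q : Fin m) :
    ((q:ℕ) = 0 ∧ ((P0.succAbove (Equiv.swap Q0 Q1 q) : Fin (m+1)):ℕ) = 2) ∨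
    ((q:ℕ) = 1 ∧ ((P0.succAbove (Equiv.swap Q0 Q1 q) : Fin (m+1)):ℕ) = 1) ∨
    (2 ≤ (q:ℕ) ∧ ((P0.succAbove (Equiv.swap Q0 Q1 q) : Fin (m+1)):ℕ) = (q:ℕ)+1) := by
  have hv := val_succAbove P0 (Equiv.swap Q0 Q1 q)
  rw [hP0] at hv
  by_cases h0 : (q:ℕ) = 0
  · have hq : q = Q0 := Fin.ext (by omega)
    rw [hq, Equiv.swap_apply_left] at hv ⊢
    left
    refine ⟨by omega, ?_⟩
    rw [hv]; split_ifs <;> omega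
  by_cases h1 : (q:ℕ) = 1
  · have hq : q = Q1 := Fin.ext (by omega)
    rw [hq, Equiv.swap_apply_right] at hv ⊢
    right; left
    refine ⟨by omega, ?_⟩
    rw [hv]; split_ifs <;> omega
  · have hq0 : q ≠ Q0 := by intro h; rw [h, hQ0] at h0; exact h0 rfl
    have hq1 : q ≠ Q1 := by intro h; rw [h, hQ1] at h1; exact h1 rfl
    rw [Equiv.swap_apply_of_ne_of_ne hq0 hq1] at hv ⊢
    right; right
    refine ⟨by omega, ?_⟩
    rw [hv]; split_ifs <;> omega

include hm hP0 hvI hQ0 hQ1 hrel in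
lemma case2_push : ∀ q : Fin m, ∃ x : Fin (m+1),
    ((q:ℕ) = 0 ∧ (x:ℕ) = 2 ∨ (q:ℕ) = 1 ∧ (x:ℕ) = 1 ∨ 2 ≤ (q:ℕ) ∧ (x:ℕ) = (q:ℕ)+1) ∧
    ((σ q:ℕ) < i - 1 ∧ (π x:ℕ) = (σ q:ℕ) ∨ i - 1 ≤ (σ q:ℕ) ∧ (π x:ℕ) = (σ q:ℕ)+1) := by
  intro q
  refine ⟨P0.succAbove (Equiv.swap Q0 Q1 q), ?_, ?_⟩
  · exact case2_pos hm P0 Q0 Q1 hP0 hQ0 hQ1 q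
  · have h := hrel (Equiv.swap Q0 Q1 q)
    rw [Equiv.swap_apply_self] at h
    rw [h]
    have hv := val_succAbove vI (σ q)
    rw [hvI] at hv
    split_ifs at hv <;> omega

include hm hP0 hvI hQ0 hQ1 hrel in
lemma case2_pull : ∀ x : Fin (m+1), (x:ℕ) ≠ 0 → ∃ q : Fin m,
    ((q:ℕ) = 0 ∧ (x:ℕ) = 2 ∨ (q:ℕ) = 1 ∧ (x:ℕ) = 1 ∨ 2 ≤ (q:ℕ) ∧ (x:ℕ) = (q:ℕ)+1) ∧
    ((σ q:ℕ) < i - 1 ∧ (π x:ℕ) = (σ q:ℕ) ∨ i - 1 ≤ (σ q:ℕ) ∧ (π x:ℕ) = (σ q:ℕ)+1) := by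
  intro x hx
  have hx' : x ≠ P0 := by intro h; apply hx; rw [h, hP0]
  obtain ⟨w, hw⟩ := Fin.exists_succAbove_eq hx'
  refine ⟨Equiv.swap Q0 Q1 w, ?_, ?_⟩
  · have := case2_pos hm P0 Q0 Q1 hP0 hQ0 hQ1 (Equiv.swap Q0 Q1 w)
    rw [Equiv.swap_apply_self, hw] at this
    exact this
  · have h := hrel w
    rw [hw] at h
    rw [h]
    have hv := val_succAbove vI (σ (Equiv.swap Q0 Q1 w))
    rw [hvI] at hv
    split_ifs at hv <;> omega

-- Direction A: occurrences in σ give occurrences in π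
include hm hl1 hli hij hjm hP0 hP1 hP2 hvI hQ0 hQ1 hrel hπ0 hπ1 hπ2 hσ0 hσ1 in
lemma case2_A_1243 :
    ContainsPat σ ![1,2,4,3] → ContainsPat π ![1,2,4,3] := by
  intro hc
  rw [contains1243_iff] at hc ⊢
  obtain ⟨q1, q2, q3, q4, h12, h23, h34, v12, v24, v43⟩ := hc
  have push := case2_push hm π σ P0 vI Q0 Q1 hP0 hvI hQ0 hQ1 hrel
  obtain ⟨x1, hx1p, hx1v⟩ := push q1
  obtain ⟨x2, hx2p, hx2v⟩ := push q2
  obtain ⟨x3, hx3p, hx3v⟩ := push q3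
  obtain ⟨x4, hx4p, hx4v⟩ := push q4
  by_cases c01 : (q1:ℕ) = 0 ∧ (q2:ℕ) = 1
  · -- slots 1,2 are σ-positions 0,1 (values l-1, j-2); use π-positions 0,1 instead
    have hq1 : q1 = Q0 := Fin.ext (by omega)
    have hq2 : q2 = Q1 := Fin.ext (by omega)
    have hv1 : (σ q1:ℕ) = l - 1 := by rw [hq1]; exact hσ0
    have hv2 : (σ q2:ℕ) = j - 2 := by rw [hq2]; exact hσ1
    refine ⟨P0, P1, x3, x4, ?_, ?_, ?_, ?_, ?_, ?_⟩
    · omega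
    · rcases hx3p with ⟨h,h'⟩|⟨h,h'⟩|⟨h,h'⟩ <;> omega
    · rcases hx3p with ⟨h,h'⟩|⟨h,h'⟩|⟨h,h'⟩ <;> rcases hx4p with ⟨g,g'⟩|⟨g,g'⟩|⟨g,g'⟩ <;> omega
    · omega
    · rcases hx4v with ⟨h,h'⟩|⟨h,h'⟩ <;> omega
    · rcases hx4v with ⟨h,h'⟩|⟨h,h'⟩ <;> rcases hx3v with ⟨g,g'⟩|⟨g,g'⟩ <;> omega
  · -- order is preserved
    have c01' : (q1:ℕ) ≠ 0 ∨ (q2:ℕ) ≠ 1 := by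
      by_contra h; push_neg at h; exact c01 ⟨h.1, h.2⟩
    refine ⟨x1, x2, x3, x4, ?_, ?_, ?_, ?_, ?_, ?_⟩
    · rcases c01' with h|h <;>
        rcases hx1p with ⟨h1,h1'⟩|⟨h1,h1'⟩|⟨h1,h1'⟩ <;>
        rcases hx2p with ⟨h2,h2'⟩|⟨h2,h2'⟩|⟨h2,h2'⟩ <;> omega
    · rcases hx2p with ⟨h1,h1'⟩|⟨h1,h1'⟩|⟨h1,h1'⟩ <;>
        rcases hx3p with ⟨h2,h2'⟩|⟨h2,h2'⟩|⟨h2,h2'⟩ <;> omega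
    · rcases hx3p with ⟨h1,h1'⟩|⟨h1,h1'⟩|⟨h1,h1'⟩ <;>
        rcases hx4p with ⟨h2,h2'⟩|⟨h2,h2'⟩|⟨h2,h2'⟩ <;> omega
    · rcases hx1v with ⟨h1,h1'⟩|⟨h1,h1'⟩ <;> rcases hx2v with ⟨h2,h2'⟩|⟨h2,h2'⟩ <;> omega
    · rcases hx2v with ⟨h1,h1'⟩|⟨h1,h1'⟩ <;> rcases hx4v with ⟨h2,h2'⟩|⟨h2,h2'⟩ <;> omega
    · rcases hx4v with ⟨h1,h1'⟩|⟨h1,h1'⟩ <;> rcases hx3v with ⟨h2,h2'⟩|⟨h2,h2'⟩ <;> omega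

include hm hl1 hli hij hjm him hP0 hP1 hP2 hvI hQ0 hQ1 hrel hπ0 hπ1 hπ2 hσ0 hσ1 in
lemma case2_A_1324 :
    ContainsPat σ ![1,3,2,4] → ContainsPat π ![1,3,2,4] ∨ ContainsPat π ![1,2,4,3] := by
  intro hc
  rw [contains1324_iff] at hc
  obtain ⟨q1, q2, q3, q4, h12, h23, h34, v13, v32, v24⟩ := hc
  have push := case2_push hm π σ P0 vI Q0 Q1 hP0 hvI hQ0 hQ1 hrel
  obtain ⟨x1, hx1p, hx1v⟩ := push q1
  obtain ⟨x2, hx2p, hx2v⟩ := push q2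
  obtain ⟨x3, hx3p, hx3v⟩ := push q3
  obtain ⟨x4, hx4p, hx4v⟩ := push q4
  by_cases c01 : (q1:ℕ) = 0 ∧ (q2:ℕ) = 1
  · have hq1 : q1 = Q0 := Fin.ext (by omega)
    have hq2 : q2 = Q1 := Fin.ext (by omega)
    have hv1 : (σ q1:ℕ) = l - 1 := by rw [hq1]; exact hσ0
    have hv2 : (σ q2:ℕ) = j - 2 := by rw [hq2]; exact hσ1
    by_cases hc3 : i - 1 ≤ (σ q3:ℕ)
    · -- use π-positions 0,1,x3,x4 : 1324
      left
      rw [contains1324_iff]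
      refine ⟨P0, P1, x3, x4, ?_, ?_, ?_, ?_, ?_, ?_⟩
      · omega
      · rcases hx3p with ⟨h,h'⟩|⟨h,h'⟩|⟨h,h'⟩ <;> omega
      · rcases hx3p with ⟨h,h'⟩|⟨h,h'⟩|⟨h,h'⟩ <;> rcases hx4p with ⟨g,g'⟩|⟨g,g'⟩|⟨g,g'⟩ <;> omega
      · rcases hx3v with ⟨h,h'⟩|⟨h,h'⟩ <;> omega
      · rcases hx3v with ⟨h,h'⟩|⟨h,h'⟩ <;> omega
      · rcases hx4v with ⟨h,h'⟩|⟨h,h'⟩ <;> omega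
    · -- σ q3 < i-1 : use the position of value i
      have him' : i < m + 1 := by omega
      set z := π.symm ⟨i, him'⟩ with hz
      have hπz : (π z : ℕ) = i := by rw [hz, Equiv.apply_symm_apply]
      have hz0 : (z:ℕ) ≠ 0 := by
        intro h
        have : z = P0 := Fin.ext (by omega)
        rw [this, hπ0] at hπz; omega
      have hz1 : (z:ℕ) ≠ 1 := by
        intro h
        have : z = P1 := Fin.ext (by omega)
        rw [this, hπ1] at hπz; omega
      have hz2 : (z:ℕ) ≠ 2 := by
        intro h
        have : z = P2 := Fin.ext (by omega)
        rw [this, hπ2] at hπz; omega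
      have hx4j : j ≤ (π x4 : ℕ) := by
        rcases hx4v with ⟨h,h'⟩|⟨h,h'⟩ <;> omega
      by_cases hzx : (z:ℕ) < (x4:ℕ)
      · left
        rw [contains1324_iff]
        refine ⟨P0, P1, z, x4, ?_, ?_, ?_, ?_, ?_, ?_⟩
        · omega
        · omega
        · omega
        · omega
        · omega
        · omega
      · -- z is after x4 : pattern 1243 on (P2, x3, x4, z)
        right
        rw [contains1243_iff]
        have hzx4 : (x4:ℕ) < (z:ℕ) := by
          have hne : (x4:ℕ) ≠ (z:ℕ) := by
            intro h
            have hxz : x4 = z := Fin.ext h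
            rw [hxz] at hx4j
            omega
          omega
        refine ⟨P2, x3, x4, z, ?_, ?_, ?_, ?_, ?_, ?_⟩
        · rcases hx3p with ⟨h,h'⟩|⟨h,h'⟩|⟨h,h'⟩ <;> omega
        · rcases hx3p with ⟨h,h'⟩|⟨h,h'⟩|⟨h,h'⟩ <;> rcases hx4p with ⟨g,g'⟩|⟨g,g'⟩|⟨g,g'⟩ <;> omega
        · omega
        · rcases hx3v with ⟨h,h'⟩|⟨h,h'⟩ <;> omega
        · rcases hx3v with ⟨h,h'⟩|⟨h,h'⟩ <;> omega
        · omega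
  · left
    rw [contains1324_iff]
    have c01' : (q1:ℕ) ≠ 0 ∨ (q2:ℕ) ≠ 1 := by
      by_contra h; push_neg at h; exact c01 ⟨h.1, h.2⟩
    refine ⟨x1, x2, x3, x4, ?_, ?_, ?_, ?_, ?_, ?_⟩
    · rcases c01' with h|h <;>
        rcases hx1p with ⟨h1,h1'⟩|⟨h1,h1'⟩|⟨h1,h1'⟩ <;>
        rcases hx2p with ⟨h2,h2'⟩|⟨h2,h2'⟩|⟨h2,h2'⟩ <;> omega
    · rcases hx2p with ⟨h1,h1'⟩|⟨h1,h1'⟩|⟨h1,h1'⟩ <;>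
        rcases hx3p with ⟨h2,h2'⟩|⟨h2,h2'⟩|⟨h2,h2'⟩ <;> omega
    · rcases hx3p with ⟨h1,h1'⟩|⟨h1,h1'⟩|⟨h1,h1'⟩ <;>
        rcases hx4p with ⟨h2,h2'⟩|⟨h2,h2'⟩|⟨h2,h2'⟩ <;> omega
    · rcases hx1v with ⟨h1,h1'⟩|⟨h1,h1'⟩ <;> rcases hx3v with ⟨h2,h2'⟩|⟨h2,h2'⟩ <;> omega
    · rcases hx3v with ⟨h1,h1'⟩|⟨h1,h1'⟩ <;> rcases hx2v with ⟨h2,h2'⟩|⟨h2,h2'⟩ <;> omega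
    · rcases hx2v with ⟨h1,h1'⟩|⟨h1,h1'⟩ <;> rcases hx4v with ⟨h2,h2'⟩|⟨h2,h2'⟩ <;> omega


-- Direction B: occurrences in π give occurrences in σ
include hm hl1 hli hij hjm hP0 hP1 hP2 hvI hQ0 hQ1 hrel hπ0 hπ1 hπ2 in
lemma case2_B_1243 :
    ContainsPat π ![1,2,4,3] → ContainsPat σ ![1,2,4,3] := by
  intro hc
  rw [contains1243_iff] at hc ⊢
  obtain ⟨x1, x2, x3, x4, h12, h23, h34, v12, v24, v43⟩ := hc
  have pull := case2_pull hm π σ P0 vI Q0 Q1 hP0 hvI hQ0 hQ1 hrel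
  by_cases e0 : (x1:ℕ) = 0
  · have hval1 : (π x1 : ℕ) = i - 1 := by
      rw [show x1 = P0 from Fin.ext (by omega)]; exact hπ0
    have hx2ne2 : (x2:ℕ) ≠ 2 := by
      intro h
      have h2 : (π x2:ℕ) = l - 1 := by
        rw [show x2 = P2 from Fin.ext (by omega)]; exact hπ2
      omega
    by_cases e1 : (x2:ℕ) = 1
    · have hval2 : (π x2 : ℕ) = j - 1 := by
        rw [show x2 = P1 from Fin.ext (by omega)]; exact hπ1
      have hx3ne2 : (x3:ℕ) ≠ 2 := by
        intro h
        have h2 : (π x3:ℕ) = l - 1 := by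
          rw [show x3 = P2 from Fin.ext (by omega)]; exact hπ2
        omega
      have hx4ne2 : (x4:ℕ) ≠ 2 := by
        intro h
        have h2 : (π x4:ℕ) = l - 1 := by
          rw [show x4 = P2 from Fin.ext (by omega)]; exact hπ2
        omega
      obtain ⟨qa, hqap, hqav⟩ := pull P2 (by omega)
      obtain ⟨qb, hqbp, hqbv⟩ := pull P1 (by omega)
      obtain ⟨q3, hq3p, hq3v⟩ := pull x3 (by omega)
      obtain ⟨q4, hq4p, hq4v⟩ := pull x4 (by omega)
      rw [hπ2] at hqav; rw [hπ1] at hqbv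
      rw [hP2] at hqap; rw [hP1] at hqbp
      refine ⟨qa, qb, q3, q4, ?_, ?_, ?_, ?_, ?_, ?_⟩
      · rcases hqap with ⟨h,h'⟩|⟨h,h'⟩|⟨h,h'⟩ <;> rcases hqbp with ⟨g,g'⟩|⟨g,g'⟩|⟨g,g'⟩ <;> omega
      · rcases hqbp with ⟨h,h'⟩|⟨h,h'⟩|⟨h,h'⟩ <;> rcases hq3p with ⟨g,g'⟩|⟨g,g'⟩|⟨g,g'⟩ <;> omega
      · rcases hq3p with ⟨h,h'⟩|⟨h,h'⟩|⟨h,h'⟩ <;> rcases hq4p with ⟨g,g'⟩|⟨g,g'⟩|⟨g,g'⟩ <;> omega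
      · rcases hqav with ⟨h,h'⟩|⟨h,h'⟩ <;> rcases hqbv with ⟨g,g'⟩|⟨g,g'⟩ <;> omega
      · rcases hqbv with ⟨h,h'⟩|⟨h,h'⟩ <;> rcases hq4v with ⟨g,g'⟩|⟨g,g'⟩ <;> omega
      · rcases hq4v with ⟨h,h'⟩|⟨h,h'⟩ <;> rcases hq3v with ⟨g,g'⟩|⟨g,g'⟩ <;> omega
    · -- x2, x3, x4 ≥ 3; replace first slot by π-position 2 (value l-1)
      have hx2g : 3 ≤ (x2:ℕ) := by omega
      obtain ⟨qa, hqap, hqav⟩ := pull P2 (by omega)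
      obtain ⟨q2, hq2p, hq2v⟩ := pull x2 (by omega)
      obtain ⟨q3, hq3p, hq3v⟩ := pull x3 (by omega)
      obtain ⟨q4, hq4p, hq4v⟩ := pull x4 (by omega)
      rw [hπ2] at hqav
      rw [hP2] at hqap
      refine ⟨qa, q2, q3, q4, ?_, ?_, ?_, ?_, ?_, ?_⟩
      · rcases hqap with ⟨h,h'⟩|⟨h,h'⟩|⟨h,h'⟩ <;> rcases hq2p with ⟨g,g'⟩|⟨g,g'⟩|⟨g,g'⟩ <;> omega
      · rcases hq2p with ⟨h,h'⟩|⟨h,h'⟩|⟨h,h'⟩ <;> rcases hq3p with ⟨g,g'⟩|⟨g,g'⟩|⟨g,g'⟩ <;> omega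
      · rcases hq3p with ⟨h,h'⟩|⟨h,h'⟩|⟨h,h'⟩ <;> rcases hq4p with ⟨g,g'⟩|⟨g,g'⟩|⟨g,g'⟩ <;> omega
      · rcases hqav with ⟨h,h'⟩|⟨h,h'⟩ <;> rcases hq2v with ⟨g,g'⟩|⟨g,g'⟩ <;> omega
      · rcases hq2v with ⟨h,h'⟩|⟨h,h'⟩ <;> rcases hq4v with ⟨g,g'⟩|⟨g,g'⟩ <;> omega
      · rcases hq4v with ⟨h,h'⟩|⟨h,h'⟩ <;> rcases hq3v with ⟨g,g'⟩|⟨g,g'⟩ <;> omega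
  · -- x1 ≥ 1 : the pulled positions are order-isomorphic
    have hne12 : (x1:ℕ) ≠ 1 ∨ (x2:ℕ) ≠ 2 := by
      by_cases h1 : (x1:ℕ) = 1
      · right
        intro h2
        have hv1 : (π x1:ℕ) = j - 1 := by
          rw [show x1 = P1 from Fin.ext (by omega)]; exact hπ1
        have hv2 : (π x2:ℕ) = l - 1 := by
          rw [show x2 = P2 from Fin.ext (by omega)]; exact hπ2
        omega
      · left; exact h1
    obtain ⟨q1, hq1p, hq1v⟩ := pull x1 (by omega)
    obtain ⟨q2, hq2p, hq2v⟩ := pull x2 (by omega)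
    obtain ⟨q3, hq3p, hq3v⟩ := pull x3 (by omega)
    obtain ⟨q4, hq4p, hq4v⟩ := pull x4 (by omega)
    refine ⟨q1, q2, q3, q4, ?_, ?_, ?_, ?_, ?_, ?_⟩
    · rcases hne12 with h|h <;> rcases hq1p with ⟨h1,h1'⟩|⟨h1,h1'⟩|⟨h1,h1'⟩ <;>
        rcases hq2p with ⟨h2,h2'⟩|⟨h2,h2'⟩|⟨h2,h2'⟩ <;> omega
    · rcases hq2p with ⟨h1,h1'⟩|⟨h1,h1'⟩|⟨h1,h1'⟩ <;>
        rcases hq3p with ⟨h2,h2'⟩|⟨h2,h2'⟩|⟨h2,h2'⟩ <;> omega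
    · rcases hq3p with ⟨h1,h1'⟩|⟨h1,h1'⟩|⟨h1,h1'⟩ <;>
        rcases hq4p with ⟨h2,h2'⟩|⟨h2,h2'⟩|⟨h2,h2'⟩ <;> omega
    · rcases hq1v with ⟨h1,h1'⟩|⟨h1,h1'⟩ <;> rcases hq2v with ⟨h2,h2'⟩|⟨h2,h2'⟩ <;> omega
    · rcases hq2v with ⟨h1,h1'⟩|⟨h1,h1'⟩ <;> rcases hq4v with ⟨h2,h2'⟩|⟨h2,h2'⟩ <;> omega
    · rcases hq4v with ⟨h1,h1'⟩|⟨h1,h1'⟩ <;> rcases hq3v with ⟨h2,h2'⟩|⟨h2,h2'⟩ <;> omega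

include hm hl1 hli hij hjm hP0 hP1 hP2 hvI hQ0 hQ1 hrel hπ0 hπ1 hπ2 in
lemma case2_B_1324 :
    ContainsPat π ![1,3,2,4] → ContainsPat σ ![1,3,2,4] := by
  intro hc
  rw [contains1324_iff] at hc ⊢
  obtain ⟨x1, x2, x3, x4, h12, h23, h34, v13, v32, v24⟩ := hc
  have pull := case2_pull hm π σ P0 vI Q0 Q1 hP0 hvI hQ0 hQ1 hrel
  by_cases e0 : (x1:ℕ) = 0
  · have hval1 : (π x1 : ℕ) = i - 1 := by
      rw [show x1 = P0 from Fin.ext (by omega)]; exact hπ0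
    have hx3ne2 : (x3:ℕ) ≠ 2 := by
      intro h
      have h2 : (π x3:ℕ) = l - 1 := by
        rw [show x3 = P2 from Fin.ext (by omega)]; exact hπ2
      omega
    have hx2ne2 : (x2:ℕ) ≠ 2 := by
      intro h
      have h2 : (π x2:ℕ) = l - 1 := by
        rw [show x2 = P2 from Fin.ext (by omega)]; exact hπ2
      omega
    have hx4ne2 : (x4:ℕ) ≠ 2 := by
      intro h
      have h2 : (π x4:ℕ) = l - 1 := by
        rw [show x4 = P2 from Fin.ext (by omega)]; exact hπ2
      omega
    by_cases e1 : (x2:ℕ) = 1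
    · have hval2 : (π x2 : ℕ) = j - 1 := by
        rw [show x2 = P1 from Fin.ext (by omega)]; exact hπ1
      obtain ⟨qa, hqap, hqav⟩ := pull P2 (by omega)
      obtain ⟨qb, hqbp, hqbv⟩ := pull P1 (by omega)
      obtain ⟨q3, hq3p, hq3v⟩ := pull x3 (by omega)
      obtain ⟨q4, hq4p, hq4v⟩ := pull x4 (by omega)
      rw [hπ2] at hqav; rw [hπ1] at hqbv
      rw [hP2] at hqap; rw [hP1] at hqbp
      refine ⟨qa, qb, q3, q4, ?_, ?_, ?_, ?_, ?_, ?_⟩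
      · rcases hqap with ⟨h,h'⟩|⟨h,h'⟩|⟨h,h'⟩ <;> rcases hqbp with ⟨g,g'⟩|⟨g,g'⟩|⟨g,g'⟩ <;> omega
      · rcases hqbp with ⟨h,h'⟩|⟨h,h'⟩|⟨h,h'⟩ <;> rcases hq3p with ⟨g,g'⟩|⟨g,g'⟩|⟨g,g'⟩ <;> omega
      · rcases hq3p with ⟨h,h'⟩|⟨h,h'⟩|⟨h,h'⟩ <;> rcases hq4p with ⟨g,g'⟩|⟨g,g'⟩|⟨g,g'⟩ <;> omega
      · rcases hqav with ⟨h,h'⟩|⟨h,h'⟩ <;> rcases hq3v with ⟨g,g'⟩|⟨g,g'⟩ <;> omega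
      · rcases hq3v with ⟨h,h'⟩|⟨h,h'⟩ <;> rcases hqbv with ⟨g,g'⟩|⟨g,g'⟩ <;> omega
      · rcases hqbv with ⟨h,h'⟩|⟨h,h'⟩ <;> rcases hq4v with ⟨g,g'⟩|⟨g,g'⟩ <;> omega
    · have hx2g : 3 ≤ (x2:ℕ) := by omega
      obtain ⟨qa, hqap, hqav⟩ := pull P2 (by omega)
      obtain ⟨q2, hq2p, hq2v⟩ := pull x2 (by omega)
      obtain ⟨q3, hq3p, hq3v⟩ := pull x3 (by omega)
      obtain ⟨q4, hq4p, hq4v⟩ := pull x4 (by omega)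
      rw [hπ2] at hqav
      rw [hP2] at hqap
      refine ⟨qa, q2, q3, q4, ?_, ?_, ?_, ?_, ?_, ?_⟩
      · rcases hqap with ⟨h,h'⟩|⟨h,h'⟩|⟨h,h'⟩ <;> rcases hq2p with ⟨g,g'⟩|⟨g,g'⟩|⟨g,g'⟩ <;> omega
      · rcases hq2p with ⟨h,h'⟩|⟨h,h'⟩|⟨h,h'⟩ <;> rcases hq3p with ⟨g,g'⟩|⟨g,g'⟩|⟨g,g'⟩ <;> omega
      · rcases hq3p with ⟨h,h'⟩|⟨h,h'⟩|⟨h,h'⟩ <;> rcases hq4p with ⟨g,g'⟩|⟨g,g'⟩|⟨g,g'⟩ <;> omega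
      · rcases hqav with ⟨h,h'⟩|⟨h,h'⟩ <;> rcases hq3v with ⟨g,g'⟩|⟨g,g'⟩ <;> omega
      · rcases hq3v with ⟨h,h'⟩|⟨h,h'⟩ <;> rcases hq2v with ⟨g,g'⟩|⟨g,g'⟩ <;> omega
      · rcases hq2v with ⟨h,h'⟩|⟨h,h'⟩ <;> rcases hq4v with ⟨g,g'⟩|⟨g,g'⟩ <;> omega
  · have hne12 : (x1:ℕ) ≠ 1 ∨ (x2:ℕ) ≠ 2 := by
      by_cases h1 : (x1:ℕ) = 1
      · right
        intro h2
        have hv1 : (π x1:ℕ) = j - 1 := by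
          rw [show x1 = P1 from Fin.ext (by omega)]; exact hπ1
        have hv2 : (π x2:ℕ) = l - 1 := by
          rw [show x2 = P2 from Fin.ext (by omega)]; exact hπ2
        omega
      · left; exact h1
    obtain ⟨q1, hq1p, hq1v⟩ := pull x1 (by omega)
    obtain ⟨q2, hq2p, hq2v⟩ := pull x2 (by omega)
    obtain ⟨q3, hq3p, hq3v⟩ := pull x3 (by omega)
    obtain ⟨q4, hq4p, hq4v⟩ := pull x4 (by omega)
    refine ⟨q1, q2, q3, q4, ?_, ?_, ?_, ?_, ?_, ?_⟩
    · rcases hne12 with h|h <;> rcases hq1p with ⟨h1,h1'⟩|⟨h1,h1'⟩|⟨h1,h1'⟩ <;>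
        rcases hq2p with ⟨h2,h2'⟩|⟨h2,h2'⟩|⟨h2,h2'⟩ <;> omega
    · rcases hq2p with ⟨h1,h1'⟩|⟨h1,h1'⟩|⟨h1,h1'⟩ <;>
        rcases hq3p with ⟨h2,h2'⟩|⟨h2,h2'⟩|⟨h2,h2'⟩ <;> omega
    · rcases hq3p with ⟨h1,h1'⟩|⟨h1,h1'⟩|⟨h1,h1'⟩ <;>
        rcases hq4p with ⟨h2,h2'⟩|⟨h2,h2'⟩|⟨h2,h2'⟩ <;> omega
    · rcases hq1v with ⟨h1,h1'⟩|⟨h1,h1'⟩ <;> rcases hq3v with ⟨h2,h2'⟩|⟨h2,h2'⟩ <;> omega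
    · rcases hq3v with ⟨h1,h1'⟩|⟨h1,h1'⟩ <;> rcases hq2v with ⟨h2,h2'⟩|⟨h2,h2'⟩ <;> omega
    · rcases hq2v with ⟨h1,h1'⟩|⟨h1,h1'⟩ <;> rcases hq4v with ⟨h2,h2'⟩|⟨h2,h2'⟩ <;> omega

end Case2

end Aux


namespace Aux
open Equiv

variable {m : ℕ}

section Dichotomy

variable {i j : ℕ} (hm : 3 ≤ m) (hi1 : 1 ≤ i) (hij : i + 2 ≤ j) (hjm : j ≤ m)
  (π : Perm (Fin (m+1))) (P0 P1 P2 : Fin (m+1))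
  (hP0 : (P0:ℕ) = 0) (hP1 : (P1:ℕ) = 1) (hP2 : (P2:ℕ) = 2)
  (hπ0 : (π P0 : ℕ) = i - 1) (hπ1 : (π P1 : ℕ) = j - 1)

include hm hi1 hij hjm hP0 hP1 hP2 hπ0 hπ1 in
lemma dichotomy (h43 : ¬ ContainsPat π ![1,2,4,3]) (h32 : ¬ ContainsPat π ![1,3,2,4]) :
    (π P2 : ℕ) + 1 < i ∨ (π P2 : ℕ) = j := by
  have hne0 : (π P2 : ℕ) ≠ i - 1 := by
    have := val_ne_of_ne π (x := P2) (y := P0) (by omega)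
    omega
  have hne1 : (π P2 : ℕ) ≠ j - 1 := by
    have := val_ne_of_ne π (x := P2) (y := P1) (by omega)
    omega
  by_contra hcon
  push_neg at hcon
  obtain ⟨hge, hne⟩ := hcon
  -- the position y of the value j
  have hjlt : j < m + 1 := by omega
  set y := π.symm ⟨j, hjlt⟩ with hy
  have hπy : (π y : ℕ) = j := by rw [hy, Equiv.apply_symm_apply]
  have hy0 : (y:ℕ) ≠ 0 := by
    intro h
    have : y = P0 := Fin.ext (by omega)
    rw [this] at hπy; omega
  have hy1 : (y:ℕ) ≠ 1 := by
    intro h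
    have : y = P1 := Fin.ext (by omega)
    rw [this] at hπy; omega
  have hy2 : (y:ℕ) ≠ 2 := by
    intro h
    have : y = P2 := Fin.ext (by omega)
    rw [this] at hπy; omega
  by_cases hlt : (π P2 : ℕ) < j
  · -- 1324 pattern on (P0, P1, P2, y)
    apply h32
    rw [contains1324_iff]
    refine ⟨P0, P1, P2, y, ?_, ?_, ?_, ?_, ?_, ?_⟩ <;> omega
  · -- 1243 pattern on (P0, P1, P2, y)
    apply h43
    rw [contains1243_iff]
    refine ⟨P0, P1, P2, y, ?_, ?_, ?_, ?_, ?_, ?_⟩ <;> omega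

end Dichotomy

section Build

variable {i j : ℕ} (hm : 3 ≤ m) (hi1 : 1 ≤ i) (hij : i + 2 ≤ j) (hjm : j ≤ m) (him : i + 2 ≤ m)
  (P0 P1 P2 vI vJ : Fin (m+1)) (Q0 Q1 : Fin m)
  (hP0 : (P0:ℕ) = 0) (hP1 : (P1:ℕ) = 1) (hP2 : (P2:ℕ) = 2)
  (hvI : (vI:ℕ) = i - 1) (hvJ : (vJ:ℕ) = j)
  (hQ0 : (Q0:ℕ) = 0) (hQ1 : (Q1:ℕ) = 1)

include hm hP0 hP2 hQ0 in
lemma sa20 : P2.succAbove Q0 = P0 := by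
  apply Fin.ext
  rw [val_succAbove]
  split_ifs <;> omega

include hm hP1 hP2 hQ1 in
lemma sa21 : P2.succAbove Q1 = P1 := by
  apply Fin.ext
  rw [val_succAbove]
  split_ifs <;> omega

include hm hP0 hP1 hQ0 in
lemma sa01 : P0.succAbove Q0 = P1 := by
  apply Fin.ext
  rw [val_succAbove]
  split_ifs <;> omega

include hm hP0 hP2 hQ1 in
lemma sa02 : P0.succAbove Q1 = P2 := by
  apply Fin.ext
  rw [val_succAbove]
  split_ifs <;> omega

-- Case 1 insertion: from T m i j to T (m+1) i j
include hm hi1 hij hjm hP0 hP1 hP2 hvJ hQ0 hQ1 in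
lemma insA_mem (σ : Perm (Fin m)) (h43 : ¬ ContainsPat σ ![1,2,4,3])
    (h32 : ¬ ContainsPat σ ![1,3,2,4]) (hF : FirstIs σ i) (hS : SecondIs σ j) :
    (¬ ContainsPat (insP σ P2 vJ) ![1,2,4,3] ∧ ¬ ContainsPat (insP σ P2 vJ) ![1,3,2,4] ∧
      FirstIs (insP σ P2 vJ) i ∧ SecondIs (insP σ P2 vJ) j) ∧
      ((insP σ P2 vJ) P2 : ℕ) = j := by
  set π := insP σ P2 vJ with hπ
  have hσ0 : (σ Q0 : ℕ) = i - 1 := by have := hF Q0 hQ0; omega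
  have hσ1 : (σ Q1 : ℕ) = j - 1 := by have := hS Q1 hQ1; omega
  have hrel : ∀ q : Fin m, π (P2.succAbove q) = vJ.succAbove (σ q) := fun q =>
    insP_succAbove σ P2 vJ q
  have hπ2 : (π P2 : ℕ) = j := by rw [hπ, insP_self, hvJ]
  have hπ0 : (π P0 : ℕ) = i - 1 := by
    rw [← sa20 hm P0 P2 Q0 hP0 hP2 hQ0, hrel Q0, val_succAbove, hvJ, hσ0]
    split_ifs <;> omega
  have hπ1 : (π P1 : ℕ) = j - 1 := by
    rw [← sa21 hm P1 P2 Q1 hP1 hP2 hQ1, hrel Q1, val_succAbove, hvJ, hσ1]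
    split_ifs <;> omega
  refine ⟨⟨?_, ?_, ?_, ?_⟩, hπ2⟩
  · intro hc
    exact h43 (case1_hard_1243 hm hi1 hij hjm π σ P0 P1 P2 vJ hP0 hP1 hP2 hvJ hrel hπ0 hπ1 hπ2 hc)
  · intro hc
    exact h32 (case1_hard_1324 hm hi1 hij hjm π σ P0 P1 P2 vJ hP0 hP1 hP2 hvJ hrel hπ0 hπ1 hπ2 hc)
  · intro q hq
    have : q = P0 := Fin.ext (by omega)
    rw [this]; omega
  · intro q hq
    have : q = P1 := Fin.ext (by omega)
    rw [this]; omega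

-- Case 1 deletion: from T (m+1) i j with (π P2 : ℕ) = j to T m i j
include hm hi1 hij hjm hP0 hP1 hP2 hvJ hQ0 hQ1 in
lemma delA_mem (π : Perm (Fin (m+1))) (h43 : ¬ ContainsPat π ![1,2,4,3])
    (h32 : ¬ ContainsPat π ![1,3,2,4]) (hF : FirstIs π i) (hS : SecondIs π j)
    (hπ2 : (π P2 : ℕ) = j) :
    (¬ ContainsPat (delP π P2) ![1,2,4,3] ∧ ¬ ContainsPat (delP π P2) ![1,3,2,4] ∧
      FirstIs (delP π P2) i ∧ SecondIs (delP π P2) j) ∧ insP (delP π P2) P2 vJ = π := by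
  set σ := delP π P2 with hσ
  have hvJeq : π P2 = vJ := Fin.ext (by omega)
  have hrel : ∀ q : Fin m, π (P2.succAbove q) = vJ.succAbove (σ q) := by
    intro q
    rw [← hvJeq, hσ]
    exact (delP_succAbove π P2 q).symm
  have hσ0 : (σ Q0 : ℕ) = i - 1 := by
    have h := hrel Q0
    rw [sa20 hm P0 P2 Q0 hP0 hP2 hQ0] at h
    have hv := val_succAbove vJ (σ Q0)
    rw [← h, hvJ] at hv
    have h0 := hF P0 hP0
    split_ifs at hv <;> omega
  have hσ1 : (σ Q1 : ℕ) = j - 1 := by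
    have h := hrel Q1
    rw [sa21 hm P1 P2 Q1 hP1 hP2 hQ1] at h
    have hv := val_succAbove vJ (σ Q1)
    rw [← h, hvJ] at hv
    have h1 := hS P1 hP1
    split_ifs at hv <;> omega
  refine ⟨⟨?_, ?_, ?_, ?_⟩, ?_⟩
  · intro hc
    exact h43 (case1_easy π σ P2 vJ hP2 hvJ hrel _ hc)
  · intro hc
    exact h32 (case1_easy π σ P2 vJ hP2 hvJ hrel _ hc)
  · intro q hq
    have : q = Q0 := Fin.ext (by omega)
    rw [this]; omega
  · intro q hq
    have : q = Q1 := Fin.ext (by omega)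
    rw [this]; omega
  · rw [hσ, hvJeq.symm]
    exact insP_delP π P2

-- Case 2 insertion: from T m l (j-1), l < i, to T (m+1) i j
include hm hi1 hij hjm him hP0 hP1 hP2 hvI hQ0 hQ1 in
lemma insB_mem (l : ℕ) (hl1 : 1 ≤ l) (hli : l < i) (σ : Perm (Fin m))
    (h43 : ¬ ContainsPat σ ![1,2,4,3]) (h32 : ¬ ContainsPat σ ![1,3,2,4])
    (hF : FirstIs σ l) (hS : SecondIs σ (j-1)) :
    (¬ ContainsPat (insP ((Equiv.swap Q0 Q1).trans σ) P0 vI) ![1,2,4,3] ∧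
     ¬ ContainsPat (insP ((Equiv.swap Q0 Q1).trans σ) P0 vI) ![1,3,2,4] ∧
      FirstIs (insP ((Equiv.swap Q0 Q1).trans σ) P0 vI) i ∧
      SecondIs (insP ((Equiv.swap Q0 Q1).trans σ) P0 vI) j) ∧
      ((insP ((Equiv.swap Q0 Q1).trans σ) P0 vI) P2 : ℕ) = l - 1 := by
  set π := insP ((Equiv.swap Q0 Q1).trans σ) P0 vI with hπ
  have hσ0 : (σ Q0 : ℕ) = l - 1 := by have := hF Q0 hQ0; omega
  have hσ1 : (σ Q1 : ℕ) = j - 2 := by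
    have := hS Q1 hQ1; omega
  have hrel : ∀ q : Fin m, π (P0.succAbove q) = vI.succAbove (σ (Equiv.swap Q0 Q1 q)) := by
    intro q
    rw [hπ, insP_succAbove]
    rfl
  have hπ0 : (π P0 : ℕ) = i - 1 := by rw [hπ, insP_self, hvI]
  have hπ1 : (π P1 : ℕ) = j - 1 := by
    have h := hrel Q0
    rw [sa01 hm P0 P1 Q0 hP0 hP1 hQ0, Equiv.swap_apply_left] at h
    rw [h, val_succAbove, hvI, hσ1]
    split_ifs <;> omega
  have hπ2 : (π P2 : ℕ) = l - 1 := by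
    have h := hrel Q1
    rw [sa02 hm P0 P2 Q1 hP0 hP2 hQ1, Equiv.swap_apply_right] at h
    rw [h, val_succAbove, hvI, hσ0]
    split_ifs <;> omega
  refine ⟨⟨?_, ?_, ?_, ?_⟩, hπ2⟩
  · intro hc
    exact h43 (case2_B_1243 hm hl1 hli hij hjm π σ P0 P1 P2 vI Q0 Q1 hP0 hP1 hP2 hvI hQ0 hQ1
      hrel hπ0 hπ1 hπ2 hc)
  · intro hc
    exact h32 (case2_B_1324 hm hl1 hli hij hjm π σ P0 P1 P2 vI Q0 Q1 hP0 hP1 hP2 hvI hQ0 hQ1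
      hrel hπ0 hπ1 hπ2 hc)
  · intro q hq
    have : q = P0 := Fin.ext (by omega)
    rw [this]; omega
  · intro q hq
    have : q = P1 := Fin.ext (by omega)
    rw [this]; omega

-- Case 2 deletion: from T (m+1) i j with (π P2 : ℕ) + 1 < i
include hm hi1 hij hjm him hP0 hP1 hP2 hvI hQ0 hQ1 in
lemma delB_mem (π : Perm (Fin (m+1))) (h43 : ¬ ContainsPat π ![1,2,4,3])
    (h32 : ¬ ContainsPat π ![1,3,2,4]) (hF : FirstIs π i) (hS : SecondIs π j)
    (hπ2l : (π P2 : ℕ) + 1 < i) :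
    (¬ ContainsPat ((Equiv.swap Q0 Q1).trans (delP π P0)) ![1,2,4,3] ∧
     ¬ ContainsPat ((Equiv.swap Q0 Q1).trans (delP π P0)) ![1,3,2,4] ∧
      FirstIs ((Equiv.swap Q0 Q1).trans (delP π P0)) ((π P2 : ℕ) + 1) ∧
      SecondIs ((Equiv.swap Q0 Q1).trans (delP π P0)) (j-1)) ∧
      insP ((Equiv.swap Q0 Q1).trans ((Equiv.swap Q0 Q1).trans (delP π P0))) P0 vI = π := by
  set l := (π P2 : ℕ) + 1 with hl
  have hl1 : 1 ≤ l := by omega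
  have hli : l < i := by omega
  set σ := (Equiv.swap Q0 Q1).trans (delP π P0) with hσ
  have hπ0 : (π P0 : ℕ) = i - 1 := by have := hF P0 hP0; omega
  have hπ1 : (π P1 : ℕ) = j - 1 := by have := hS P1 hP1; omega
  have hvIeq : π P0 = vI := Fin.ext (by omega)
  have hswapinv : ∀ q : Fin m, σ (Equiv.swap Q0 Q1 q) = delP π P0 q := by
    intro q
    rw [hσ]
    simp only [Equiv.trans_apply, Equiv.swap_apply_self]
  have hrel : ∀ q : Fin m, π (P0.succAbove q) = vI.succAbove (σ (Equiv.swap Q0 Q1 q)) := by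
    intro q
    rw [hswapinv, ← hvIeq]
    exact (delP_succAbove π P0 q).symm
  have hπ2v : (π P2 : ℕ) = l - 1 := by omega
  have hσ0 : (σ Q0 : ℕ) = l - 1 := by
    have h := hrel Q1
    rw [Equiv.swap_apply_right, sa02 hm P0 P2 Q1 hP0 hP2 hQ1] at h
    have hv := val_succAbove vI (σ Q0)
    rw [← h, hvI] at hv
    split_ifs at hv <;> omega
  have hσ1 : (σ Q1 : ℕ) = j - 2 := by
    have h := hrel Q0
    rw [Equiv.swap_apply_left, sa01 hm P0 P1 Q0 hP0 hP1 hQ0] at h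
    have hv := val_succAbove vI (σ Q1)
    rw [← h, hvI] at hv
    split_ifs at hv <;> omega
  refine ⟨⟨?_, ?_, ?_, ?_⟩, ?_⟩
  · intro hc
    exact h43 (case2_A_1243 hm hl1 hli hij hjm π σ P0 P1 P2 vI Q0 Q1 hP0 hP1 hP2 hvI hQ0 hQ1
      hrel hπ0 hπ1 hπ2v hσ0 hσ1 hc)
  · intro hc
    rcases case2_A_1324 hm hl1 hli hij hjm him π σ P0 P1 P2 vI Q0 Q1 hP0 hP1 hP2 hvI hQ0 hQ1
      hrel hπ0 hπ1 hπ2v hσ0 hσ1 hc with h | h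
    · exact h32 h
    · exact h43 h
  · intro q hq
    have : q = Q0 := Fin.ext (by omega)
    rw [this]; omega
  · intro q hq
    have : q = Q1 := Fin.ext (by omega)
    rw [this]; omega
  · have hcan : (Equiv.swap Q0 Q1).trans σ = delP π P0 := by
      apply Equiv.ext
      intro q
      rw [hσ]
      simp only [Equiv.trans_apply, Equiv.swap_apply_self]
    rw [hcan, ← hvIeq]
    exact insP_delP π P0

end Build

end Aux


namespace Aux
open Equiv

/-- The subtype counted by `a`. -/
abbrev T (n i j : ℕ) : Type :=
  {π : Equiv.Perm (Fin n) //
    ¬ ContainsPat π ![1, 2, 4, 3] ∧ ¬ ContainsPat π ![1, 3, 2, 4] ∧ FirstIs π i ∧ SecondIs π j}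

lemma sigma_T_eq {m j' : ℕ} {s : Finset ℕ} {L1 L2 : {x // x ∈ s}}
    {x : T m (↑L1) j'} {y : T m (↑L2) j'} (hL : (L1:ℕ) = (L2:ℕ))
    (hxy : (x.1 : Perm (Fin m)) = y.1) :
    (⟨L1, x⟩ : Σ L : {x // x ∈ s}, T m (↑L) j') = ⟨L2, y⟩ := by
  obtain ⟨l1, h1⟩ := L1
  obtain ⟨l2, h2⟩ := L2
  simp only at hL
  subst hL
  obtain rfl : x = y := Subtype.ext hxy
  rfl

lemma key {m i j : ℕ} (hm : 3 ≤ m) (hi1 : 1 ≤ i) (him : i + 2 ≤ m) (hij : i + 2 ≤ j)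
    (hjm : j ≤ m) :
    Nat.card (T (m+1) i j)
      = Nat.card (T m i j) + ∑ l ∈ Finset.Icc 1 (i-1), Nat.card (T m l (j-1)) := by
  obtain ⟨P0, hP0⟩ : ∃ x : Fin (m+1), (x:ℕ) = 0 := ⟨⟨0, by omega⟩, rfl⟩
  obtain ⟨P1, hP1⟩ : ∃ x : Fin (m+1), (x:ℕ) = 1 := ⟨⟨1, by omega⟩, rfl⟩
  obtain ⟨P2, hP2⟩ : ∃ x : Fin (m+1), (x:ℕ) = 2 := ⟨⟨2, by omega⟩, rfl⟩
  obtain ⟨vI, hvI⟩ : ∃ x : Fin (m+1), (x:ℕ) = i - 1 := ⟨⟨i-1, by omega⟩, rfl⟩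
  obtain ⟨vJ, hvJ⟩ : ∃ x : Fin (m+1), (x:ℕ) = j := ⟨⟨j, by omega⟩, rfl⟩
  obtain ⟨Q0, hQ0⟩ : ∃ x : Fin m, (x:ℕ) = 0 := ⟨⟨0, by omega⟩, rfl⟩
  obtain ⟨Q1, hQ1⟩ : ∃ x : Fin m, (x:ℕ) = 1 := ⟨⟨1, by omega⟩, rfl⟩
  set S : Finset ℕ := Finset.Icc 1 (i-1) with hSdef
  let G : (T m i j ⊕ (Σ L : {x // x ∈ S}, T m (↑L) (j-1))) → T (m+1) i j :=
    Sum.elim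
      (fun t => ⟨insP t.1 P2 vJ,
        (insA_mem hm hi1 hij hjm P0 P1 P2 vJ Q0 Q1 hP0 hP1 hP2 hvJ hQ0 hQ1 t.1
          t.2.1 t.2.2.1 t.2.2.2.1 t.2.2.2.2).1⟩)
      (fun s => ⟨insP ((Equiv.swap Q0 Q1).trans s.2.1) P0 vI,
        (insB_mem hm hi1 hij hjm him P0 P1 P2 vI Q0 Q1 hP0 hP1 hP2 hvI hQ0 hQ1 (↑s.1)
          (Finset.mem_Icc.mp s.1.2).1 (by have := (Finset.mem_Icc.mp s.1.2).2; omega) s.2.1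
          s.2.2.1 s.2.2.2.1 s.2.2.2.2.1 s.2.2.2.2.2).1⟩)
  have hvalA : ∀ t, ((G (Sum.inl t)).1 P2 : ℕ) = j := by
    intro t
    exact (insA_mem hm hi1 hij hjm P0 P1 P2 vJ Q0 Q1 hP0 hP1 hP2 hvJ hQ0 hQ1 t.1
      t.2.1 t.2.2.1 t.2.2.2.1 t.2.2.2.2).2
  have hvalB : ∀ s, ((G (Sum.inr s)).1 P2 : ℕ) = (↑s.1 : ℕ) - 1 := by
    intro s
    exact (insB_mem hm hi1 hij hjm him P0 P1 P2 vI Q0 Q1 hP0 hP1 hP2 hvI hQ0 hQ1 (↑s.1)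
      (Finset.mem_Icc.mp s.1.2).1 (by have := (Finset.mem_Icc.mp s.1.2).2; omega) s.2.1
      s.2.2.1 s.2.2.2.1 s.2.2.2.2.1 s.2.2.2.2.2).2
  have hGinj : Function.Injective G := by
    intro s t hst
    have hval := congrArg (fun (x : T (m+1) i j) => ((x.1 P2 : Fin (m+1)) : ℕ)) hst
    cases s with
    | inl a =>
      cases t with
      | inl b =>
        have h1 : insP a.1 P2 vJ = insP b.1 P2 vJ := congrArg Subtype.val hst
        have h2 := congrArg (fun (π : Perm (Fin (m+1))) => delP π P2) h1
        simp only [delP_insP] at h2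
        exact congrArg Sum.inl (Subtype.ext h2)
      | inr b =>
        exfalso
        have hA := hvalA a
        have hB := hvalB b
        have hb := (Finset.mem_Icc.mp b.1.2).2
        omega
    | inr a =>
      cases t with
      | inl b =>
        exfalso
        have hA := hvalA b
        have hB := hvalB a
        have hb := (Finset.mem_Icc.mp a.1.2).2
        omega
      | inr b =>
        have hA := hvalB a
        have hB := hvalB b
        have ha1 := (Finset.mem_Icc.mp a.1.2).1
        have hb1 := (Finset.mem_Icc.mp b.1.2).1
        have hL : (↑a.1 : ℕ) = (↑b.1 : ℕ) := by omega
        have h1 : insP ((Equiv.swap Q0 Q1).trans a.2.1) P0 vI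
            = insP ((Equiv.swap Q0 Q1).trans b.2.1) P0 vI := congrArg Subtype.val hst
        have h2 := congrArg (fun (π : Perm (Fin (m+1))) => delP π P0) h1
        simp only [delP_insP] at h2
        have h3 : a.2.1 = b.2.1 := by
          apply Equiv.ext
          intro q
          have h4 := congrArg (fun (e : Perm (Fin m)) => e (Equiv.swap Q0 Q1 q)) h2
          simpa [Equiv.trans_apply, Equiv.swap_apply_self] using h4
        apply congrArg Sum.inr
        obtain ⟨a1, a2⟩ := a
        obtain ⟨b1, b2⟩ := b
        exact sigma_T_eq hL h3
  have hGsurj : Function.Surjective G := by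
    rintro ⟨π, h43, h32, hF, hS⟩
    have hπ0 : (π P0 : ℕ) = i - 1 := by have := hF P0 hP0; omega
    have hπ1 : (π P1 : ℕ) = j - 1 := by have := hS P1 hP1; omega
    rcases dichotomy hm hi1 hij hjm π P0 P1 P2 hP0 hP1 hP2 hπ0 hπ1 h43 h32 with hlt | heq
    · obtain ⟨concl, hins⟩ := delB_mem hm hi1 hij hjm him P0 P1 P2 vI Q0 Q1 hP0 hP1 hP2 hvI
        hQ0 hQ1 π h43 h32 hF hS hlt
      refine ⟨Sum.inr ⟨⟨(π P2 : ℕ) + 1, Finset.mem_Icc.mpr (by omega)⟩,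
        ⟨(Equiv.swap Q0 Q1).trans (delP π P0), concl⟩⟩, ?_⟩
      exact Subtype.ext hins
    · obtain ⟨concl, hins⟩ := delA_mem hm hi1 hij hjm P0 P1 P2 vJ Q0 Q1 hP0 hP1 hP2 hvJ hQ0 hQ1
        π h43 h32 hF hS heq
      exact ⟨Sum.inl ⟨delP π P2, concl⟩, Subtype.ext hins⟩
  have hcard1 : Nat.card (T (m+1) i j)
      = Nat.card (T m i j ⊕ (Σ L : {x // x ∈ S}, T m (↑L) (j-1))) :=
    (Nat.card_eq_of_bijective G ⟨hGinj, hGsurj⟩).symm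
  rw [hcard1, Nat.card_sum]
  congr 1
  classical
  letI : ∀ l : ℕ, Fintype (T m l (j-1)) := fun l => Fintype.ofFinite _
  rw [Nat.card_eq_fintype_card, Fintype.card_sigma,
    ← Finset.sum_coe_sort S (fun l => Nat.card (T m l (j-1)))]
  exact Finset.sum_congr rfl (fun x _ => (Nat.card_eq_fintype_card).symm)

end Aux


theorem stmt_11 :
    ∀ n i j, 1 ≤ i → i ≤ n - 3 → i + 2 ≤ j → j ≤ n - 1 →
      a n i j = a (n - 1) i j + ∑ ℓ ∈ Finset.Icc 1 (i - 1), a (n - 1) ℓ (j - 1) := by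
  intro n i j hi1 hin hij hjn
  obtain ⟨m, rfl⟩ : ∃ m, n = m + 1 := ⟨n - 1, by omega⟩
  have hm : 3 ≤ m := by omega
  have him : i + 2 ≤ m := by omega
  have hjm : j ≤ m := by omega
  have h := Aux.key hm hi1 him hij hjm
  simp only [Nat.add_sub_cancel]
  exact h
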